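/- Let h: W → Y be a finite morphism of schemes of finite type over a field k, and let F be a coherent sheaf on W whose scheme-theoretic support is all of W. If the pushforward h_* F is an invertible O_Y-module (locally free of rank one), then h is an isomorphism and F is a line bundle on W. -/

import Mathlib

attribute [local instance] RingHomInvPair.of_ringEquiv


open IsLocalizedModule in
theorem aux_end_bijective {R F : Type*} [CommRing R] [AddCommGroup F] [Module R F]
    [Module.Finite R F] [Module.Projective R F]
    (hrankF : ∀ (p : Ideal R) (_ : p.IsPrime),
      Nonempty (LocalizedModule p.primeCompl F ≃ₗ[Localization.AtPrime p]
        Localization.AtPrime p)) :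
    Function.Bijective (LinearMap.toSpanSingleton R (F →ₗ[R] F) LinearMap.id) := by
  have hfp : Module.FinitePresentation R F := Module.finitePresentation_of_projective R F
  apply bijective_of_isLocalized_maximal
    (fun P _ ↦ Localization.AtPrime P) (fun P _ ↦ Algebra.linearMap R _)
    (fun P _ ↦ LocalizedModule P.primeCompl F →ₗ[Localization.AtPrime P]
      LocalizedModule P.primeCompl F)
    (fun P _ ↦ LocalizedModule.map P.primeCompl)
  intro P hP
  obtain ⟨hJ⟩ := hrankF P hP.isPrime
  set LJ := Localization.AtPrime P
  set FJ := LocalizedModule P.primeCompl F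
  set β : LJ →ₗ[R] (FJ →ₗ[LJ] FJ) :=
    (LinearMap.toSpanSingleton LJ (FJ →ₗ[LJ] FJ) LinearMap.id).restrictScalars R with hβ
  have hβbij : Function.Bijective β := by
    constructor
    · intro a b hab
      have h1 : a • (hJ.symm 1) = b • (hJ.symm 1) := LinearMap.congr_fun hab (hJ.symm 1)
      have := congrArg hJ h1
      simpa [map_smul] using this
    · intro φ
      refine ⟨hJ (φ (hJ.symm 1)), ?_⟩
      have hx : ∀ x : FJ, x = hJ x • hJ.symm 1 := fun x ↦ by
        rw [← map_smul, smul_eq_mul, mul_one, hJ.symm_apply_apply]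
      refine LinearMap.ext fun x ↦ ?_
      show hJ (φ (hJ.symm 1)) • x = φ x
      conv_lhs => rw [hx x, smul_comm]
      rw [← map_smul hJ.symm, smul_eq_mul, mul_one, hJ.symm_apply_apply, ← map_smul φ, ← hx x]
  have heq : map P.primeCompl (Algebra.linearMap R LJ) (LocalizedModule.map P.primeCompl)
      (LinearMap.toSpanSingleton R (F →ₗ[R] F) LinearMap.id) = β := by
    apply IsLocalizedModule.ext P.primeCompl (Algebra.linearMap R LJ)
      (IsLocalizedModule.map_units (LocalizedModule.map (M := F) (N := F) P.primeCompl))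
    refine LinearMap.ext fun r ↦ ?_
    simp only [LinearMap.comp_apply, Algebra.linearMap_apply, β]
    rw [show algebraMap R LJ r = Algebra.linearMap R LJ r from rfl, IsLocalizedModule.map_apply]
    simp only [LinearMap.toSpanSingleton_apply, map_smul, LocalizedModule.map_id,
      LinearMap.coe_restrictScalars]
    rw [Algebra.linearMap_apply, algebraMap_smul]
  rw [heq]; exact hβbij

theorem aux_rank {R S F : Type*} [CommRing R] [CommRing S] [Algebra R S]
    [AddCommGroup F] [Module R F] [Module S F] [IsScalarTower R S F]
    (hbij : Function.Bijective (algebraMap R S))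
    (hrankF : ∀ (p : Ideal R) (_ : p.IsPrime),
      Nonempty (LocalizedModule p.primeCompl F ≃ₗ[Localization.AtPrime p]
        Localization.AtPrime p))
    (q : Ideal S) (hq : q.IsPrime) :
    Nonempty (LocalizedModule q.primeCompl F ≃ₗ[Localization.AtPrime q]
      Localization.AtPrime q) := by
  haveI := hq
  set e := RingEquiv.ofBijective (algebraMap R S) hbij with he
  set p := q.comap (algebraMap R S) with hp
  haveI hpprime : p.IsPrime := Ideal.IsPrime.comap _
  have hmem : ∀ r : R, r ∈ p.primeCompl ↔ algebraMap R S r ∈ q.primeCompl := fun r ↦ Iff.rfl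
  have hesymm : ∀ s : S, algebraMap R S (e.symm s) = s := fun s ↦ e.apply_symm_apply s
  have hmem' : ∀ s : S, s ∈ q.primeCompl → e.symm s ∈ p.primeCompl := fun s hs ↦
    (hmem _).mpr (by rw [hesymm]; exact hs)
  set Lq := Localization.AtPrime q with hLq
  set Fq := LocalizedModule q.primeCompl F with hFq
  letI : Module R Fq := inferInstance
  have hsmulRS : ∀ (r : R) (m : Fq), r • m = algebraMap R S r • m := fun r m ↦ (algebraMap_smul S r m).symm
  letI : IsScalarTower R S Fq :=
    ⟨fun r s m ↦ by rw [Algebra.smul_def, hsmulRS, mul_smul]⟩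
  set fq : F →ₗ[R] Fq :=
    { toFun := fun x ↦ LocalizedModule.mkLinearMap q.primeCompl F x
      map_add' := fun x y ↦ map_add _ x y
      map_smul' := fun r x ↦ by
        simp only [RingHom.id_apply, hsmulRS]
        rw [← algebraMap_smul S r x, map_smul] } with hfq
  haveI : IsLocalizedModule p.primeCompl fq := by
    constructor
    · intro s
      rw [Module.End.isUnit_iff]
      have := (Module.End.isUnit_iff _).mp
        (IsLocalizedModule.map_units (LocalizedModule.mkLinearMap q.primeCompl F)
          ⟨algebraMap R S s.1, (hmem s.1).mp s.2⟩)
      convert this using 1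
      funext m; exact hsmulRS _ m
    · intro y
      obtain ⟨⟨x, t⟩, ht⟩ := IsLocalizedModule.surj q.primeCompl
        (LocalizedModule.mkLinearMap q.primeCompl F) y
      refine ⟨⟨x, ⟨e.symm t.1, hmem' t.1 t.2⟩⟩, ?_⟩
      show (e.symm t.1) • y = fq x
      rw [hsmulRS, hesymm]
      exact ht
    · intro x x' hxx'
      obtain ⟨c, hc⟩ := IsLocalizedModule.exists_of_eq (S := q.primeCompl)
        (f := LocalizedModule.mkLinearMap q.primeCompl F) hxx'
      refine ⟨⟨e.symm c.1, hmem' c.1 c.2⟩, ?_⟩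
      show (e.symm c.1) • x = (e.symm c.1) • x'
      rw [← algebraMap_smul S, ← algebraMap_smul S (e.symm c.1) x', hesymm]
      exact hc
  haveI : IsLocalization p.primeCompl Lq := by
    constructor; constructor
    · intro y
      rw [IsScalarTower.algebraMap_apply R S Lq]
      exact IsLocalization.map_units Lq (⟨algebraMap R S y.1, (hmem y.1).mp y.2⟩ : q.primeCompl)
    · intro z
      obtain ⟨⟨a, t⟩, haz⟩ := IsLocalization.surj (S := Lq) q.primeCompl z
      refine ⟨⟨e.symm a, ⟨e.symm t.1, hmem' t.1 t.2⟩⟩, ?_⟩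
      simp only [IsScalarTower.algebraMap_apply R S Lq, hesymm]
      exact haz
    · intro a b hab
      simp only [IsScalarTower.algebraMap_apply R S Lq] at hab
      obtain ⟨c, hc⟩ := IsLocalization.exists_of_eq (M := q.primeCompl) hab
      refine ⟨⟨e.symm c.1, hmem' c.1 c.2⟩, ?_⟩
      apply e.injective
      simp only [map_mul, hesymm]
      show algebraMap R S _ * algebraMap R S a = algebraMap R S _ * algebraMap R S b
      simp only [hesymm]
      exact hc
  obtain ⟨gp⟩ := hrankF p hpprime
  let algE : Localization.AtPrime p ≃ₐ[R] Lq := IsLocalization.algEquiv p.primeCompl _ _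
  let iso := IsLocalizedModule.iso p.primeCompl fq
  have hE : Function.Bijective (fun m : Fq ↦ algE (gp (iso.symm m))) :=
    algE.bijective.comp (gp.bijective.comp iso.symm.bijective)
  let ES : Fq →ₗ[S] Lq :=
    { toFun := fun m ↦ algE (gp (iso.symm m))
      map_add' := fun x y ↦ by simp only [map_add]
      map_smul' := fun s m ↦ by
        simp only [RingHom.id_apply]
        have h1 : s • m = (e.symm s) • m := by rw [hsmulRS, hesymm]
        rw [h1]
        have h2 : iso.symm ((e.symm s) • m) = (e.symm s) • iso.symm m :=
          map_smul iso.symm _ _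
        rw [h2, ← algebraMap_smul (Localization.AtPrime p) (e.symm s) (iso.symm m),
          map_smul, smul_eq_mul, map_mul, AlgEquiv.commutes,
          IsScalarTower.algebraMap_apply R S Lq, hesymm, ← Algebra.smul_def] }
  let EL := ES.extendScalarsOfIsLocalization q.primeCompl Lq
  exact ⟨LinearEquiv.ofBijective EL hE⟩



/-- **(Affine form of) triviality of finite maps with invertible pushforward.**
If `R → S` is a ring map making `S` module-finite over `R` (the affine incarnation of a finite
morphism `h : W → Y` of schemes of finite type over a field), and `F` is an `S`-module which is
faithful over `S` (its scheme-theoretic support is all of `W`) and which is invertible as an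
`R`-module (i.e. `h_* F` is locally free of rank one), then `R → S` is an isomorphism and `F`
is invertible over `S` (a line bundle on `W`). -/
theorem stmt1 {R S F : Type*} [CommRing R] [CommRing S] [Algebra R S]
    [AddCommGroup F] [Module R F] [Module S F] [IsScalarTower R S F]
    (hfin : Module.Finite R S)
    (hfaithful : ∀ s : S, (∀ x : F, s • x = 0) → s = 0)
    (hfinF : Module.Finite R F) (hprojF : Module.Projective R F)
    (hrankF : ∀ (p : Ideal R) (_ : p.IsPrime),
      Nonempty (LocalizedModule p.primeCompl F ≃ₗ[Localization.AtPrime p]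
        Localization.AtPrime p)) :
    Function.Bijective (algebraMap R S) ∧
      Module.Finite S F ∧ Module.Projective S F ∧
      ∀ (q : Ideal S) (_ : q.IsPrime),
        Nonempty (LocalizedModule q.primeCompl F ≃ₗ[Localization.AtPrime q]
          Localization.AtPrime q) := by
  haveI := hfin; haveI := hfinF; haveI := hprojF
  have hbijE := aux_end_bijective (R := R) (F := F) hrankF
  haveI : SMulCommClass S R F :=
    ⟨fun s r x ↦ by rw [← algebraMap_smul S r x, ← mul_smul, mul_comm, mul_smul, algebraMap_smul]⟩
  set ψ : S →+* Module.End R F := Module.toModuleEnd R F with hψdef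
  have hψinj : Function.Injective ψ := by
    rw [injective_iff_map_eq_zero]
    intro s hs
    exact hfaithful s fun x ↦ LinearMap.congr_fun hs x
  have hcomp : ∀ r : R,
      ψ (algebraMap R S r) = LinearMap.toSpanSingleton R (F →ₗ[R] F) LinearMap.id r := by
    intro r
    refine LinearMap.ext fun x ↦ ?_
    show algebraMap R S r • x = (r • (LinearMap.id : F →ₗ[R] F)) x
    rw [LinearMap.smul_apply, LinearMap.id_apply, algebraMap_smul]
  have hbijalg : Function.Bijective (algebraMap R S) := by
    constructor
    · intro a b h
      exact hbijE.injective (by rw [← hcomp, ← hcomp, h])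
    · intro s
      obtain ⟨r, hr⟩ := hbijE.surjective (ψ s)
      exact ⟨r, hψinj (by rw [hcomp, hr])⟩
  refine ⟨hbijalg, Module.Finite.of_restrictScalars_finite R S F, ?_,
    fun q hq ↦ aux_rank hbijalg hrankF q hq⟩
  letI e := RingEquiv.ofBijective (algebraMap R S) hbijalg
  exact Module.Projective.of_equiv (σ := (e : R →+* S)) (σ' := (e.symm : S →+* R))
    { toFun := id, invFun := id, left_inv := fun _ ↦ rfl, right_inv := fun _ ↦ rfl,
      map_add' := fun _ _ ↦ rfl,
      map_smul' := fun r x ↦ (algebraMap_smul S r x).symm }
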